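/- Let Δ be a modulus of arity k with Δ mapping [0,1]^k into [0,1]. Let x̄, ȳ ∈ [0,1]^k with Δ(π(ȳ − x̄)) > 0 and a, b ∈ [0,1] with a ≤ b < a + Δ(π(ȳ − x̄)). Define u(z̄) = min{1, a + ((b−a)/Δ(π(ȳ − x̄))) · Δ(π(z̄ − x̄))}. Then u : [0,1]^k → [0,1] satisfies u(x̄) = a, u(ȳ) = b, and u respects Δ, i.e., |u(z̄) − u(w̄)| ≤ Δ(π(z̄ − w̄)) for all z̄, w̄ ∈ [0,1]^k. -/

import Mathlib

theorem stmt_9 {k : ℕ} (Δ : (Fin k → ℝ) → ℝ)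
    (hcont : ContinuousOn Δ {x | ∀ i, 0 ≤ x i})
    (hnn : ∀ x : Fin k → ℝ, (∀ i, 0 ≤ x i) → 0 ≤ Δ x)
    (hmono : ∀ x y : Fin k → ℝ, (∀ i, 0 ≤ x i) → (∀ i, x i ≤ y i) → Δ x ≤ Δ y)
    (hsub : ∀ x y : Fin k → ℝ, (∀ i, 0 ≤ x i) → (∀ i, 0 ≤ y i) → Δ (x + y) ≤ Δ x + Δ y)
    (h0 : Δ 0 = 0)
    (hΔ1 : ∀ x : Fin k → ℝ, (∀ i, x i ∈ Set.Icc (0 : ℝ) 1) → Δ x ≤ 1)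
    (x y : Fin k → ℝ) (hx : ∀ i, x i ∈ Set.Icc (0 : ℝ) 1) (hy : ∀ i, y i ∈ Set.Icc (0 : ℝ) 1)
    (a b : ℝ) (ha : a ∈ Set.Icc (0 : ℝ) 1) (hb : b ∈ Set.Icc (0 : ℝ) 1)
    (hD : 0 < Δ (fun i => |y i - x i|))
    (hab : a ≤ b) (hb' : b < a + Δ (fun i => |y i - x i|)) :
    (fun z : Fin k → ℝ =>
        min 1 (a + ((b - a) / Δ (fun i => |y i - x i|)) * Δ (fun i => |z i - x i|))) x = a ∧
    (fun z : Fin k → ℝ =>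
        min 1 (a + ((b - a) / Δ (fun i => |y i - x i|)) * Δ (fun i => |z i - x i|))) y = b ∧
    (∀ z : Fin k → ℝ, (∀ i, z i ∈ Set.Icc (0 : ℝ) 1) →
        min 1 (a + ((b - a) / Δ (fun i => |y i - x i|)) * Δ (fun i => |z i - x i|))
          ∈ Set.Icc (0 : ℝ) 1) ∧
    (∀ z w : Fin k → ℝ, (∀ i, z i ∈ Set.Icc (0 : ℝ) 1) → (∀ i, w i ∈ Set.Icc (0 : ℝ) 1) →
        |min 1 (a + ((b - a) / Δ (fun i => |y i - x i|)) * Δ (fun i => |z i - x i|)) -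
          min 1 (a + ((b - a) / Δ (fun i => |y i - x i|)) * Δ (fun i => |w i - x i|))|
          ≤ Δ (fun i => |z i - w i|)) := by
  set D := Δ (fun i => |y i - x i|) with hDdef
  set c := (b - a) / D with hc
  have hc0 : 0 ≤ c := div_nonneg (by linarith) hD.le
  have hc1 : c < 1 := (div_lt_one hD).2 (by linarith)
  -- key Lipschitz lemma for Δ
  have key : ∀ z w : Fin k → ℝ,
      |Δ (fun i => |z i - x i|) - Δ (fun i => |w i - x i|)| ≤ Δ (fun i => |z i - w i|) := by
    intro z w
    have hr : ∀ i, (0:ℝ) ≤ |z i - w i| := fun i => abs_nonneg _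
    have h1 : Δ (fun i => |z i - x i|) ≤ Δ (fun i => |w i - x i|) + Δ (fun i => |z i - w i|) := by
      calc Δ (fun i => |z i - x i|)
          ≤ Δ ((fun i => |w i - x i|) + fun i => |z i - w i|) := by
            apply hmono _ _ (fun i => abs_nonneg _)
            intro i
            have : z i - x i = (w i - x i) + (z i - w i) := by ring
            rw [this]
            simp only [Pi.add_apply]
            exact (abs_add_le _ _)
        _ ≤ _ := hsub _ _ (fun i => abs_nonneg _) hr
    have h2 : Δ (fun i => |w i - x i|) ≤ Δ (fun i => |z i - x i|) + Δ (fun i => |z i - w i|) := by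
      calc Δ (fun i => |w i - x i|)
          ≤ Δ ((fun i => |z i - x i|) + fun i => |z i - w i|) := by
            apply hmono _ _ (fun i => abs_nonneg _)
            intro i
            have : w i - x i = (z i - x i) + -(z i - w i) := by ring
            rw [this]
            simp only [Pi.add_apply]
            exact le_trans (abs_add_le _ _) (by rw [abs_neg])
        _ ≤ _ := hsub _ _ (fun i => abs_nonneg _) hr
    rw [abs_sub_le_iff]; constructor <;> linarith
  refine ⟨?_, ?_, ?_, ?_⟩
  · simp only
    have : (fun i => |x i - x i|) = (0 : Fin k → ℝ) := by
      funext i; simp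
    rw [this, h0, mul_zero, add_zero]
    exact min_eq_right ha.2
  · simp only
    have hcD : a + c * D = b := by rw [hc]; field_simp; ring
    rw [hcD]
    exact min_eq_right hb.2
  · intro z hz
    constructor
    · apply le_min zero_le_one
      have := hnn (fun i => |z i - x i|) (fun i => abs_nonneg _)
      nlinarith [ha.1]
    · exact min_le_left _ _
  · intro z w hz hw
    have h1 : |min 1 (a + c * Δ (fun i => |z i - x i|)) -
        min 1 (a + c * Δ (fun i => |w i - x i|))| ≤
        |(a + c * Δ (fun i => |z i - x i|)) - (a + c * Δ (fun i => |w i - x i|))| := by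
      have := abs_min_sub_min_le_max (1:ℝ) (a + c * Δ (fun i => |z i - x i|)) 1
        (a + c * Δ (fun i => |w i - x i|))
      simpa [abs_nonneg] using this
    refine h1.trans ?_
    have h2 : (a + c * Δ (fun i => |z i - x i|)) - (a + c * Δ (fun i => |w i - x i|)) =
        c * (Δ (fun i => |z i - x i|) - Δ (fun i => |w i - x i|)) := by ring
    rw [h2, abs_mul, abs_of_nonneg hc0]
    calc c * |Δ (fun i => |z i - x i|) - Δ (fun i => |w i - x i|)|
        ≤ 1 * |Δ (fun i => |z i - x i|) - Δ (fun i => |w i - x i|)| := by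
          apply mul_le_mul_of_nonneg_right hc1.le (abs_nonneg _)
      _ = _ := one_mul _
      _ ≤ _ := key z w
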